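/- Let V be a finite nonempty type and let P be an X-set property on finite subsets of V. The automorphism group of the P-TAR graph is generated by the set consisting of (i) all automorphisms of the form ν_R : S ↦ S ⊖ R where R ⊆ V is P-irrelevant, together with (ii) all automorphisms induced by a bijection ψ : V → V that maps minimal P-sets to minimal P-sets (acting on a P-set S by taking its image ψ(S)). That is, the subgroup generated by these automorphisms is the whole automorphism group of the P-TAR graph. -/

import Mathlib

/-- The TAR (token addition/removal) graph of a predicate `P` on finite subsets of `V`:
vertices are the `P`-sets, two `P`-sets being adjacent iff their symmetric difference
has exactly one element. -/
def tarGraph {V : Type*} [DecidableEq V] (P : Finset V → Prop) :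
    SimpleGraph {S : Finset V // P S} where
  Adj S T := (symmDiff S.1 T.1).card = 1
  symm := ⟨fun S T h => by show (symmDiff T.1 S.1).card = 1; rwa [symmDiff_comm]⟩
  loopless := ⟨fun S h => by simp [symmDiff_self] at h⟩

/-- `S` is a minimal `P`-set: `S` is a `P`-set and no proper subset of `S` is a `P`-set. -/
def IsMinimalPSet {V : Type*} (P : Finset V → Prop) (S : Finset V) : Prop :=
  P S ∧ ∀ T : Finset V, T ⊂ S → ¬ P T

/-- `R` is `P`-irrelevant: no minimal `P`-set contains any vertex of `R`. -/
def IsIrrelevant {V : Type*} (P : Finset V → Prop) (R : Finset V) : Prop :=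
  ∀ S : Finset V, IsMinimalPSet P S → ∀ v ∈ R, v ∉ S

open Finset

namespace TARAux
variable {V : Type*} [DecidableEq V]

lemma card_symmDiff_triangle (A B C : Finset V) :
    (symmDiff A C).card ≤ (symmDiff A B).card + (symmDiff B C).card :=
  le_trans (Finset.card_le_card (symmDiff_triangle A B C)) (Finset.card_union_le _ _)

lemma symmDiff_cancel_pair (A B C : Finset V) :
    symmDiff (symmDiff A C) (symmDiff B C) = symmDiff A B := by
  ext x; simp [Finset.mem_symmDiff]; tauto

lemma mem_iff_card_symmDiff_lt (A : Finset V) (x : V) :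
    x ∈ A ↔ (symmDiff A {x}).card < A.card := by
  by_cases h : x ∈ A
  · have : symmDiff A {x} = A.erase x := by
      ext y; simp [Finset.mem_symmDiff, Finset.mem_erase]; aesop
    simp only [h, this, true_iff]
    exact Finset.card_erase_lt_of_mem h
  · have : symmDiff A {x} = insert x A := by
      ext y; simp [Finset.mem_symmDiff, Finset.mem_insert]; aesop
    simp only [h, this, false_iff, not_lt, Finset.card_insert_of_notMem h]
    omega

lemma card_symmDiff_add (A R : Finset V) :
    (symmDiff A R).card + 2 * (A ∩ R).card = A.card + R.card := by
  have h1 : (symmDiff A R).card = (A \ R).card + (R \ A).card := by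
    rw [symmDiff_def, Finset.sup_eq_union]
    exact Finset.card_union_of_disjoint (disjoint_sdiff_sdiff)
  have h2 := Finset.card_sdiff_add_card_inter A R
  have h3 := Finset.card_sdiff_add_card_inter R A
  rw [Finset.inter_comm R A] at h3
  omega

variable {P : Finset V → Prop}

lemma iso_card_le (hP1 : ∀ S T : Finset V, P S → S ⊆ T → P T)
    (φ : tarGraph P ≃g tarGraph P) :
    ∀ (n : ℕ) (S T : {S : Finset V // P S}), (symmDiff S.1 T.1).card = n →
      (symmDiff (φ S).1 (φ T).1).card ≤ n := by
  intro n
  induction n with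
  | zero =>
    intro S T h
    have hST : S = T := by
      apply Subtype.ext
      have := Finset.card_eq_zero.mp h
      have h2 : ∀ x, x ∈ S.1 ↔ x ∈ T.1 := by
        intro x
        by_contra hx
        have : x ∈ symmDiff S.1 T.1 := by
          simp [Finset.mem_symmDiff]; tauto
        simp [this] at *; simp_all
      exact Finset.ext h2
    subst hST; simp
  | succ n ih =>
    intro S T h
    -- find S' adjacent to S with card (symmDiff S'.1 T.1) = n
    obtain ⟨S', hadj, hcard⟩ : ∃ S' : {S : Finset V // P S},
        (symmDiff S.1 S'.1).card = 1 ∧ (symmDiff S'.1 T.1).card = n := by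
      by_cases hne : (T.1 \ S.1).Nonempty
      · obtain ⟨t, ht⟩ := hne
        rw [Finset.mem_sdiff] at ht
        refine ⟨⟨insert t S.1, hP1 S.1 _ S.2 (Finset.subset_insert _ _)⟩, ?_, ?_⟩
        · have : symmDiff S.1 (insert t S.1) = {t} := by
            ext x; simp [Finset.mem_symmDiff]; aesop
          simp [this]
        · have he : symmDiff (insert t S.1) T.1 = (symmDiff S.1 T.1).erase t := by
            ext x; simp [Finset.mem_symmDiff, Finset.mem_erase]
            constructor
            · rintro (⟨h1 | h1, h2⟩ | ⟨h1, h2⟩) <;> aesop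
            · aesop
          have hmem : t ∈ symmDiff S.1 T.1 := by simp [Finset.mem_symmDiff]; tauto
          rw [he, Finset.card_erase_of_mem hmem, h]; omega
      · have hsub : T.1 ⊆ S.1 := by
          intro x hx; by_contra hx2
          exact hne ⟨x, Finset.mem_sdiff.mpr ⟨hx, hx2⟩⟩
        have hd : symmDiff S.1 T.1 = S.1 \ T.1 := by
          ext x; simp only [Finset.mem_symmDiff, Finset.mem_sdiff]
          constructor
          · rintro (⟨h1, h2⟩ | ⟨h1, h2⟩); exact ⟨h1, h2⟩; exact absurd (hsub h1) h2
          · tauto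
        have : (S.1 \ T.1).Nonempty := by
          rw [← hd, ← Finset.card_pos, h]; omega
        obtain ⟨s, hs⟩ := this
        rw [Finset.mem_sdiff] at hs
        refine ⟨⟨S.1.erase s, hP1 T.1 _ T.2 ?_⟩, ?_, ?_⟩
        · intro x hx
          exact Finset.mem_erase.mpr ⟨fun hxs => hs.2 (hxs ▸ hx), hsub hx⟩
        · have : symmDiff S.1 (S.1.erase s) = {s} := by
            ext x; simp [Finset.mem_symmDiff, Finset.mem_erase]; aesop
          simp [this]
        · have he : symmDiff (S.1.erase s) T.1 = (symmDiff S.1 T.1).erase s := by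
            ext x; simp [Finset.mem_symmDiff, Finset.mem_erase]; aesop
          have hmem : s ∈ symmDiff S.1 T.1 := by simp [Finset.mem_symmDiff]; tauto
          rw [he, Finset.card_erase_of_mem hmem, h]; omega
    have hadj' : (symmDiff (φ S).1 (φ S').1).card = 1 := φ.map_rel_iff.mpr hadj
    calc (symmDiff (φ S).1 (φ T).1).card
        ≤ (symmDiff (φ S).1 (φ S').1).card + (symmDiff (φ S').1 (φ T).1).card :=
          card_symmDiff_triangle _ _ _
      _ ≤ 1 + n := add_le_add (le_of_eq hadj') (ih S' T hcard)
      _ = n + 1 := by omega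

lemma iso_card_eq (hP1 : ∀ S T : Finset V, P S → S ⊆ T → P T)
    (φ : tarGraph P ≃g tarGraph P) (S T : {S : Finset V // P S}) :
    (symmDiff (φ S).1 (φ T).1).card = (symmDiff S.1 T.1).card := by
  refine le_antisymm (iso_card_le hP1 φ _ S T rfl) ?_
  have := iso_card_le hP1 φ.symm _ (φ S) (φ T) rfl
  simpa using this

lemma iso_form [Fintype V] [Nonempty V]
    (hP1 : ∀ S T : Finset V, P S → S ⊆ T → P T)
    (hP3 : ∀ v : V, P (Finset.univ \ {v}))
    (φ : tarGraph P ≃g tarGraph P) :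
    ∃ σ : Equiv.Perm V, ∃ R : Finset V,
      ∀ S : {S : Finset V // P S}, (φ S).1 = symmDiff (S.1.image σ) R := by
  have hUniv : P Finset.univ :=
    hP1 _ _ (hP3 (Classical.arbitrary V)) (Finset.subset_univ _)
  set topS : {S : Finset V // P S} := ⟨Finset.univ, hUniv⟩ with htopS
  set U : Finset V := (φ topS).1 with hU
  let coS : V → {S : Finset V // P S} := fun v => ⟨Finset.univ \ {v}, hP3 v⟩
  have hco : ∀ v, symmDiff (coS v).1 Finset.univ = {v} := by
    intro v; ext x
    simp only [coS, Finset.mem_symmDiff, Finset.mem_sdiff, Finset.mem_univ, Finset.mem_singleton]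
    tauto
  have hkey : ∀ v, (symmDiff (φ (coS v)).1 U).card = 1 := by
    intro v
    rw [hU, iso_card_eq hP1 φ (coS v) topS]
    show (symmDiff (coS v).1 Finset.univ).card = 1
    rw [hco v]; simp
  choose f hf using fun v => Finset.card_eq_one.mp (hkey v)
  have finj : Function.Injective f := by
    intro v v' hvv'
    by_contra hne
    have h2 : (symmDiff (coS v).1 (coS v').1).card = 2 := by
      have he : symmDiff (coS v).1 (coS v').1 = {v, v'} := by
        ext x
        simp only [coS, Finset.mem_symmDiff, Finset.mem_sdiff, Finset.mem_univ, true_and,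
          Finset.mem_singleton, Finset.mem_insert]
        by_cases hx : x = v <;> by_cases hx' : x = v' <;> simp_all
      rw [he, Finset.card_insert_of_notMem (by simp [hne]), Finset.card_singleton]
    have h0 : (symmDiff (φ (coS v)).1 (φ (coS v')).1).card = 2 := by
      rw [iso_card_eq hP1 φ]; exact h2
    rw [← symmDiff_cancel_pair (φ (coS v)).1 (φ (coS v')).1 U, hf v, hf v', hvv',
      symmDiff_self] at h0
    simp at h0
  have fbij := Finite.injective_iff_bijective.mp finj
  let σ : Equiv.Perm V := Equiv.ofBijective f fbij
  have hmem : ∀ (S : {S : Finset V // P S}) (v : V),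
      f v ∈ symmDiff (φ S).1 U ↔ v ∉ S.1 := by
    intro S v
    have huS : symmDiff S.1 Finset.univ = Finset.univ \ S.1 := by
      ext x; simp [Finset.mem_symmDiff]
    have e1 : (symmDiff (φ S).1 U).card = (Finset.univ \ S.1).card := by
      rw [hU, iso_card_eq hP1 φ S topS]
      show (symmDiff S.1 Finset.univ).card = _
      rw [huS]
    have e2 : (symmDiff (symmDiff (φ S).1 U) {f v}).card
        = (symmDiff (Finset.univ \ S.1) {v}).card := by
      have l : symmDiff (symmDiff (φ S).1 U) {f v} = symmDiff (φ S).1 (φ (coS v)).1 := by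
        rw [← hf v, symmDiff_cancel_pair]
      have r : symmDiff (Finset.univ \ S.1) {v} = symmDiff S.1 (coS v).1 := by
        rw [← huS, ← hco v, symmDiff_cancel_pair]
      rw [l, r, iso_card_eq hP1 φ]
    rw [mem_iff_card_symmDiff_lt, e1, e2, ← mem_iff_card_symmDiff_lt]
    simp
  refine ⟨σ, symmDiff Finset.univ U, ?_⟩
  intro S
  have hXY : symmDiff (φ S).1 U = (Finset.univ \ S.1).image f := by
    ext w
    obtain ⟨v, rfl⟩ := fbij.2 w
    rw [hmem S v]
    constructor
    · intro hv
      exact Finset.mem_image_of_mem f (by simpa using hv)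
    · intro hv
      obtain ⟨v', hv', he⟩ := Finset.mem_image.mp hv
      rw [← finj he]
      simpa using hv'
  have himg : (Finset.univ \ S.1).image f = symmDiff (S.1.image f) Finset.univ := by
    ext w
    obtain ⟨v, rfl⟩ := fbij.2 w
    have h1 : f v ∈ (Finset.univ \ S.1).image f ↔ v ∉ S.1 := by
      constructor
      · intro hv
        obtain ⟨v', hv', he⟩ := Finset.mem_image.mp hv
        rw [← finj he]; simpa using hv'
      · intro hv; exact Finset.mem_image_of_mem f (by simpa using hv)
    have h2 : f v ∈ S.1.image f ↔ v ∈ S.1 := by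
      constructor
      · intro hv
        obtain ⟨v', hv', he⟩ := Finset.mem_image.mp hv
        rwa [← finj he]
      · exact Finset.mem_image_of_mem f
    rw [h1]
    simp only [Finset.mem_symmDiff, Finset.mem_univ, h2]
    tauto
  have : (φ S).1 = symmDiff (symmDiff (φ S).1 U) U := by
    rw [symmDiff_symmDiff_cancel_right]
  rw [this, hXY, himg]
  have hσf : S.1.image σ = S.1.image f := rfl
  rw [hσf, symmDiff_assoc]

lemma counting [Fintype V]
    (hP1 : ∀ S T : Finset V, P S → S ⊆ T → P T)
    (σ : Equiv.Perm V) (R : Finset V)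
    (φ : tarGraph P ≃g tarGraph P)
    (hform : ∀ S : {S : Finset V // P S}, (φ S).1 = symmDiff (S.1.image σ) R) :
    ∀ v ∈ R, ∀ T : Finset V, P T → σ.symm v ∈ T → P (T.erase (σ.symm v)) := by
  classical
  have h1 : ∀ S : {S : Finset V // P S},
      (φ S).1.card + 2 * ((S.1.image σ) ∩ R).card = S.1.card + R.card := by
    intro S
    rw [hform S]
    have := card_symmDiff_add (S.1.image σ) R
    rwa [Finset.card_image_of_injective _ σ.injective] at this
  have hsum : ∑ S : {S : Finset V // P S}, (φ S).1.card
      = ∑ S : {S : Finset V // P S}, S.1.card :=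
    Equiv.sum_comp φ.toEquiv (fun S => S.1.card)
  have htot : 2 * ∑ S : {S : Finset V // P S}, ((S.1.image σ) ∩ R).card
      = (Finset.univ : Finset {S : Finset V // P S}).card * R.card := by
    have A : ∑ S : {S : Finset V // P S}, ((φ S).1.card + 2 * ((S.1.image σ) ∩ R).card)
        = ∑ S : {S : Finset V // P S}, (S.1.card + R.card) :=
      Finset.sum_congr rfl fun S _ => h1 S
    rw [Finset.sum_add_distrib, Finset.sum_add_distrib, Finset.sum_const,
      ← Finset.mul_sum, hsum, smul_eq_mul] at A
    omega
  have hc : ∀ S : {S : Finset V // P S},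
      ((S.1.image σ) ∩ R).card = ∑ v ∈ R, if σ.symm v ∈ S.1 then 1 else 0 := by
    intro S
    rw [Finset.inter_comm, ← Finset.filter_mem_eq_inter, Finset.card_filter]
    refine Finset.sum_congr rfl fun v _ => ?_
    congr 1
    simp only [Finset.mem_image, eq_iff_iff]
    constructor
    · rintro ⟨a, ha, rfl⟩; simpa using ha
    · intro h; exact ⟨σ.symm v, h, by simp⟩
  have hND : ∀ w : V, 2 * (Finset.univ.filter (fun S : {S : Finset V // P S} => w ∈ S.1)).card
      = (Finset.univ : Finset {S : Finset V // P S}).card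
        + (Finset.univ.filter
            (fun S : {S : Finset V // P S} => w ∈ S.1 ∧ ¬ P (S.1.erase w))).card := by
    intro w
    have hsplit := Finset.card_filter_add_card_filter_not
      (s := (Finset.univ : Finset {S : Finset V // P S})) (p := fun S => w ∈ S.1)
    have hbij : (Finset.univ.filter (fun S : {S : Finset V // P S} => w ∉ S.1)).card
        = (Finset.univ.filter
            (fun S : {S : Finset V // P S} => w ∈ S.1 ∧ P (S.1.erase w))).card := by
      refine Finset.card_bij'
        (i := fun S _ => (⟨insert w S.1, hP1 _ _ S.2 (Finset.subset_insert _ _)⟩ :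
          {S : Finset V // P S}))
        (j := fun S hS => ⟨S.1.erase w, (Finset.mem_filter.mp hS).2.2⟩) ?_ ?_ ?_ ?_
      · intro S hS
        have hw : w ∉ S.1 := (Finset.mem_filter.mp hS).2
        simp only [Finset.mem_filter, Finset.mem_univ, true_and]
        refine ⟨Finset.mem_insert_self _ _, ?_⟩
        rw [Finset.erase_insert hw]
        exact S.2
      · intro S hS
        simp only [Finset.mem_filter, Finset.mem_univ, true_and]
        exact Finset.notMem_erase _ _
      · intro S hS
        have hw : w ∉ S.1 := (Finset.mem_filter.mp hS).2
        exact Subtype.ext (by simpa using Finset.erase_insert hw)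
      · intro S hS
        have hw : w ∈ S.1 := (Finset.mem_filter.mp hS).2.1
        exact Subtype.ext (by simpa using Finset.insert_erase hw)
    have hsplit2 := Finset.card_filter_add_card_filter_not
      (s := Finset.univ.filter (fun S : {S : Finset V // P S} => w ∈ S.1))
      (p := fun S => P (S.1.erase w))
    rw [Finset.filter_filter, Finset.filter_filter] at hsplit2
    omega
  have hswap : ∑ S : {S : Finset V // P S}, ((S.1.image σ) ∩ R).card
      = ∑ v ∈ R, (Finset.univ.filter
          (fun S : {S : Finset V // P S} => σ.symm v ∈ S.1)).card := by
    rw [Finset.sum_congr rfl fun S _ => hc S, Finset.sum_comm]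
    exact Finset.sum_congr rfl fun v _ => (Finset.card_filter _ _).symm
  have hzero : ∑ v ∈ R, (Finset.univ.filter
      (fun S : {S : Finset V // P S} => σ.symm v ∈ S.1 ∧ ¬ P (S.1.erase (σ.symm v)))).card
      = 0 := by
    have h2 : 2 * ∑ v ∈ R, (Finset.univ.filter
        (fun S : {S : Finset V // P S} => σ.symm v ∈ S.1)).card
        = (Finset.univ : Finset {S : Finset V // P S}).card * R.card := by
      rw [← hswap]; exact htot
    rw [Finset.mul_sum] at h2
    have h4 : ∑ v ∈ R, (2 * (Finset.univ.filter
        (fun S : {S : Finset V // P S} => σ.symm v ∈ S.1)).card)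
        = ∑ v ∈ R, ((Finset.univ : Finset {S : Finset V // P S}).card
          + (Finset.univ.filter (fun S : {S : Finset V // P S} =>
              σ.symm v ∈ S.1 ∧ ¬ P (S.1.erase (σ.symm v)))).card) :=
      Finset.sum_congr rfl fun v _ => hND (σ.symm v)
    rw [Finset.sum_add_distrib, Finset.sum_const, smul_eq_mul] at h4
    have h5 : R.card * (Finset.univ : Finset {S : Finset V // P S}).card
        = (Finset.univ : Finset {S : Finset V // P S}).card * R.card := mul_comm _ _
    omega
  intro v hv T hT hvT
  have hDv := (Finset.sum_eq_zero_iff).mp hzero v hv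
  have := Finset.card_eq_zero.mp hDv
  rw [Finset.filter_eq_empty_iff] at this
  have h5 := this (Finset.mem_univ (⟨T, hT⟩ : {S : Finset V // P S}))
  simp only [not_and, not_not] at h5
  exact h5 hvT

end TARAux

open TARAux in
/-- For an X-set property `P` on a nonempty finite type `V`, the automorphism group of
the `P`-TAR graph is generated by the automorphisms of the form `ν_R : S ↦ S ⊖ R` for
`P`-irrelevant `R`, together with the automorphisms induced by bijections `ψ : V → V`
mapping minimal `P`-sets to minimal `P`-sets. -/
theorem tar_automorphism_group_generated {V : Type*}
    [Fintype V] [DecidableEq V] [Nonempty V]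
    (P : Finset V → Prop)
    (hP1 : ∀ S T : Finset V, P S → S ⊆ T → P T)
    (hP2 : ¬ P ∅)
    (hP3 : ∀ v : V, P (Finset.univ \ {v})) :
    Subgroup.closure
      {φ : tarGraph P ≃g tarGraph P |
        (∃ R : Finset V, IsIrrelevant P R ∧
          ∀ S : {S : Finset V // P S}, (φ S).1 = symmDiff S.1 R) ∨
        (∃ ψ : Equiv.Perm V,
          (∀ S : Finset V, IsMinimalPSet P S → IsMinimalPSet P (S.image ψ)) ∧
          ∀ S : {S : Finset V // P S}, (φ S).1 = S.1.image ψ)} = ⊤ := by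
  rw [Subgroup.eq_top_iff']
  intro φ
  obtain ⟨σ, R, hform⟩ := iso_form hP1 hP3 φ
  have K := counting hP1 σ R φ hform
  set R₀ : Finset V := R.image σ.symm with hR₀
  have Kw : ∀ w ∈ R₀, ∀ T : Finset V, P T → w ∈ T → P (T.erase w) := by
    intro w hw T hT hwT
    obtain ⟨v, hv, rfl⟩ := Finset.mem_image.mp hw
    exact K v hv T hT hwT
  -- removing all of R₀ preserves P
  have K' : ∀ (n : ℕ) (T : Finset V), (T ∩ R₀).card ≤ n → P T → P (T \ R₀) := by
    intro n
    induction n with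
    | zero =>
      intro T hcard hT
      have he : T ∩ R₀ = ∅ := Finset.card_eq_zero.mp (Nat.le_zero.mp hcard)
      rwa [Finset.sdiff_eq_self_iff_disjoint.mpr (Finset.disjoint_iff_inter_eq_empty.mpr he)]
    | succ n ih =>
      intro T hcard hT
      by_cases hne : (T ∩ R₀).Nonempty
      · obtain ⟨w, hw⟩ := hne
        rw [Finset.mem_inter] at hw
        have h1 : P (T.erase w) := Kw w hw.2 T hT hw.1
        have h2 : (T.erase w ∩ R₀).card ≤ n := by
          have he : T.erase w ∩ R₀ = (T ∩ R₀).erase w := by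
            ext x; simp only [Finset.mem_inter, Finset.mem_erase]; tauto
          rw [he, Finset.card_erase_of_mem (Finset.mem_inter.mpr hw)]
          omega
        have h3 := ih (T.erase w) h2 h1
        have he2 : T.erase w \ R₀ = T \ R₀ := by
          ext x
          simp only [Finset.mem_sdiff, Finset.mem_erase]
          constructor
          · tauto
          · intro hx
            exact ⟨⟨fun hxw => hx.2 (hxw ▸ hw.2), hx.1⟩, hx.2⟩
        rwa [he2] at h3
      · rw [Finset.not_nonempty_iff_eq_empty] at hne
        exact ih T (by simp [hne]) hT
  have hsd : ∀ T : Finset V, P T → P (symmDiff T R₀) := by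
    intro T hT
    refine hP1 _ _ (K' _ T le_rfl hT) ?_
    rw [symmDiff_def, Finset.sup_eq_union]
    exact Finset.subset_union_left
  -- the translation automorphism ν
  let νE : Equiv {S : Finset V // P S} {S : Finset V // P S} :=
    { toFun := fun S => ⟨symmDiff S.1 R₀, hsd S.1 S.2⟩
      invFun := fun S => ⟨symmDiff S.1 R₀, hsd S.1 S.2⟩
      left_inv := fun S => Subtype.ext (by simp [symmDiff_assoc])
      right_inv := fun S => Subtype.ext (by simp [symmDiff_assoc]) }
  let ν : tarGraph P ≃g tarGraph P :=
    { toEquiv := νE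
      map_rel_iff' := by
        intro S T
        show (symmDiff (symmDiff S.1 R₀) (symmDiff T.1 R₀)).card = 1 ↔ _
        rw [symmDiff_cancel_pair]
        exact Iff.rfl }
  have hν : ∀ S : {S : Finset V // P S}, (ν S).1 = symmDiff S.1 R₀ := fun S => rfl
  have hirrel : IsIrrelevant P R₀ := by
    intro M hM v hv hvM
    exact hM.2 (M.erase v) (Finset.erase_ssubset hvM) (Kw v hv M hM.1 hvM)
  -- the permutation automorphism ψ = φ * ν
  set ψ : tarGraph P ≃g tarGraph P := φ * ν with hψdef
  have himgR₀ : R₀.image σ = R := by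
    rw [hR₀, Finset.image_image]
    simp
  have hψ : ∀ S : {S : Finset V // P S}, (ψ S).1 = S.1.image σ := by
    intro S
    show (φ (ν S)).1 = _
    rw [hform (ν S), hν S, Finset.image_symmDiff _ _ σ.injective, himgR₀,
      symmDiff_symmDiff_cancel_right]
  have hmin : ∀ M : Finset V, IsMinimalPSet P M → IsMinimalPSet P (M.image σ) := by
    intro M hM
    constructor
    · have := (ψ ⟨M, hM.1⟩).2
      rwa [hψ ⟨M, hM.1⟩] at this
    · intro T hTsub hT
      have h1 : ψ (ψ.symm ⟨T, hT⟩) = ⟨T, hT⟩ := ψ.apply_symm_apply _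
      have h2 : (ψ.symm ⟨T, hT⟩).1.image σ = T := by
        have h3 := hψ (ψ.symm ⟨T, hT⟩)
        rw [h1] at h3
        exact h3.symm
      have h3 : (ψ.symm ⟨T, hT⟩).1 = T.image σ.symm := by
        have hre : (T.image σ.symm).image σ = T := by
          rw [Finset.image_image]; simp
        exact Finset.image_injective σ.injective (by rw [h2, hre])
      refine hM.2 (ψ.symm ⟨T, hT⟩).1 ?_ (ψ.symm ⟨T, hT⟩).2
      rw [h3]
      have hsub : T.image σ.symm ⊆ M := by
        intro x hx
        obtain ⟨y, hy, rfl⟩ := Finset.mem_image.mp hx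
        have := hTsub.1 hy
        obtain ⟨m, hm, hme⟩ := Finset.mem_image.mp this
        rw [← hme]
        simpa using hm
      refine Finset.ssubset_iff_subset_ne.mpr ⟨hsub, ?_⟩
      intro he
      have hTM : T = M.image σ := by
        rw [← he, Finset.image_image]
        simp
      exact (ne_of_lt hTsub) hTM
  -- decomposition
  have hdec : φ = ψ * ν := by
    have : ψ * ν = φ := by
      apply RelIso.ext
      intro S
      show ψ (ν S) = φ S
      apply Subtype.ext
      rw [hψ (ν S), hν S, Finset.image_symmDiff _ _ σ.injective, himgR₀, hform S]
    exact this.symm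
  rw [hdec]
  exact Subgroup.mul_mem _
    (Subgroup.subset_closure (Or.inr ⟨σ, hmin, hψ⟩))
    (Subgroup.subset_closure (Or.inl ⟨R₀, hirrel, hν⟩))
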